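/- Let (X,d) be a geodesic metric space, φ : X → ℝ a Kantorovich potential, γ a φ-Kantorovich geodesic, and s ∈ [0,1]. Set a := φ_s(γ_s), f := φ_s − a (so {f = 0} contains γ_s), and let d_f be the signed distance function from {φ_s = a}. Then for all 0 ≤ r ≤ t ≤ 1: d_f(γ_r) − d_f(γ_t) = d(γ_r, γ_t). -/

import Mathlib

/-- `ψ` is pointwise the `c`-transform of `φ` for the cost `c = d²/2`:
at every point `x`, `ψ x` is a genuine (finite) infimum of `d(x,y)²/2 - φ(y)` over `y`. -/
def IsCTransform {X : Type*} [MetricSpace X] (φ ψ : X → ℝ) : Prop :=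
  ∀ x : X, IsGLB {v : ℝ | ∃ y : X, v = dist x y ^ 2 / 2 - φ y} (ψ x)

/-- `φ` is a Kantorovich potential with (real-valued) conjugate potential `φc`. -/
def IsKantorovichPair {X : Type*} [MetricSpace X] (φ φc : X → ℝ) : Prop :=
  IsCTransform φ φc ∧ IsCTransform φc φ

/-- A constant-speed geodesic parametrized on `[0,1]`. -/
def IsGeodesic {X : Type*} [MetricSpace X] (γ : ℝ → X) : Prop :=
  ∀ s ∈ Set.Icc (0:ℝ) 1, ∀ t ∈ Set.Icc (0:ℝ) 1,
    dist (γ s) (γ t) = |s - t| * dist (γ 0) (γ 1)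

/-- A `φ`-Kantorovich geodesic: a geodesic with `φ(γ₀) + φ^c(γ₁) = ℓ(γ)²/2`,
where `ℓ(γ) = d(γ₀,γ₁)`. -/
def IsKantorovichGeodesic {X : Type*} [MetricSpace X] (φ φc : X → ℝ) (γ : ℝ → X) : Prop :=
  IsGeodesic γ ∧ φ (γ 0) + φc (γ 1) = dist (γ 0) (γ 1) ^ 2 / 2

/-- A metric space is geodesic if every pair of points is joined by a geodesic. -/
def IsGeodesicSpace (X : Type*) [MetricSpace X] : Prop :=
  ∀ x y : X, ∃ γ : ℝ → X, IsGeodesic γ ∧ γ 0 = x ∧ γ 1 = y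

/-- The interpolating intermediate-time Kantorovich potential
`φ_t(x) = -inf_y (d(x,y)²/(2t) - φ(y))` for `t ≠ 0`, and `φ_0 = φ`. -/
noncomputable def interpPotential {X : Type*} [MetricSpace X] (φ : X → ℝ) (t : ℝ) (x : X) : ℝ :=
  if t = 0 then φ x
  else -sInf {v : ℝ | ∃ y : X, v = dist x y ^ 2 / (2 * t) - φ y}

/-- The time-reversed interpolating Kantorovich potential
`φ̄_t(x) = inf_y (d(x,y)²/(2(1-t)) - φ^c(y))` for `t ≠ 1`, and `φ̄_1 = -φ^c`. -/
noncomputable def reversePotential {X : Type*} [MetricSpace X] (φc : X → ℝ) (t : ℝ) (x : X) : ℝ :=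
  if t = 1 then -φc x
  else sInf {v : ℝ | ∃ y : X, v = dist x y ^ 2 / (2 * (1 - t)) - φc y}

/-- The signed distance function from the zero-level set of `f`:
`d_f(x) = sgn(f(x)) · dist(x, {f = 0})`. -/
noncomputable def signedDistFn {X : Type*} [MetricSpace X] (f : X → ℝ) (x : X) : ℝ :=
  Real.sign (f x) * Metric.infDist x {y | f y = 0}

set_option maxHeartbeats 1000000 in
/-- Let `(X,d)` be a geodesic space, `φ` a Kantorovich potential, `γ` a `φ`-Kantorovich
geodesic and `s ∈ [0,1]`. With `a := φ_s(γ_s)`, `f := φ_s - a` and `d_f` the signed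
distance from `{φ_s = a}`, one has `d_f(γ_r) - d_f(γ_t) = d(γ_r,γ_t)` for
`0 ≤ r ≤ t ≤ 1`. -/
theorem statement9 {X : Type*} [MetricSpace X] (hgeo : IsGeodesicSpace X)
    (φ φc : X → ℝ) (hpair : IsKantorovichPair φ φc)
    (γ : ℝ → X) (hγ : IsKantorovichGeodesic φ φc γ)
    (s : ℝ) (hs : s ∈ Set.Icc (0:ℝ) 1)
    (r t : ℝ) (hr : 0 ≤ r) (hrt : r ≤ t) (ht : t ≤ 1) :
    signedDistFn (fun x => interpPotential φ s x - interpPotential φ s (γ s)) (γ r)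
        - signedDistFn (fun x => interpPotential φ s x - interpPotential φ s (γ s)) (γ t)
      = dist (γ r) (γ t) := by
  obtain ⟨hgeod, heq⟩ := hγ
  obtain ⟨hs0, hs1⟩ := hs
  have hrt1 : r ≤ 1 := hrt.trans ht
  have ht0 : 0 ≤ t := hr.trans hrt
  set ℓ : ℝ := dist (γ 0) (γ 1) with hℓdef
  have hℓ0 : (0:ℝ) ≤ ℓ := dist_nonneg
  -- duality inequality
  have hdual : ∀ x y : X, φ y + φc x ≤ dist x y ^ 2 / 2 := by
    intro x y
    have h : φc x ≤ dist x y ^ 2 / 2 - φ y := (hpair.1 x).1 ⟨y, rfl⟩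
    linarith
  -- distances along the geodesic
  have hd : ∀ u, 0 ≤ u → u ≤ 1 → ∀ v, 0 ≤ v → v ≤ 1 →
      dist (γ u) (γ v) = |u - v| * ℓ := by
    intro u hu hu' v hv hv'
    exact hgeod u ⟨hu, hu'⟩ v ⟨hv, hv'⟩
  -- the defining set of the interpolating potential is bounded below
  have hbdd : ∀ x : X, 0 < s →
      BddBelow {v : ℝ | ∃ y : X, v = dist x y ^ 2 / (2 * s) - φ y} := by
    intro x hs0'
    refine ⟨φc x, ?_⟩
    rintro v ⟨y, rfl⟩
    have h1 : φc x ≤ dist x y ^ 2 / 2 - φ y := (hpair.1 x).1 ⟨y, rfl⟩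
    have h2 : dist x y ^ 2 / 2 ≤ dist x y ^ 2 / (2 * s) := by
      rw [div_le_div_iff₀ (by norm_num) (by positivity)]
      nlinarith [mul_nonneg (sq_nonneg (dist x y)) (show (0:ℝ) ≤ 1 - s by linarith)]
    linarith
  -- lower bound on the interpolating potential
  have hLB : 0 < s → ∀ x : X,
      φ (γ 0) - dist x (γ 0) ^ 2 / (2 * s) ≤ interpPotential φ s x := by
    intro hs0' x
    rw [interpPotential, if_neg (ne_of_gt hs0')]
    have h := csInf_le (hbdd x hs0')
      (show dist x (γ 0) ^ 2 / (2 * s) - φ (γ 0) ∈ _ from ⟨γ 0, rfl⟩)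
    linarith
  -- upper bound on the interpolating potential
  have hUB : s < 1 → ∀ x : X,
      interpPotential φ s x ≤ dist x (γ 1) ^ 2 / (2 * (1 - s)) - φc (γ 1) := by
    intro hs1' x
    rcases eq_or_lt_of_le hs0 with h0 | hs0'
    · rw [interpPotential, if_pos h0.symm]
      have h := hdual (γ 1) x
      rw [dist_comm (γ 1) x] at h
      have h2 : dist x (γ 1) ^ 2 / (2 * (1 - s)) = dist x (γ 1) ^ 2 / 2 := by
        rw [← h0]; norm_num
      rw [h2]; linarith
    · rw [interpPotential, if_neg (ne_of_gt hs0')]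
      have hτ : (0:ℝ) < 1 - s := by linarith
      have key : φc (γ 1) - dist x (γ 1) ^ 2 / (2 * (1 - s)) ≤
          sInf {v : ℝ | ∃ y : X, v = dist x y ^ 2 / (2 * s) - φ y} := by
        refine le_csInf ⟨dist x x ^ 2 / (2 * s) - φ x, x, rfl⟩ ?_
        rintro v ⟨y, rfl⟩
        have hφy : φ y ≤ dist y (γ 1) ^ 2 / 2 - φc (γ 1) := by
          have h := hdual (γ 1) y
          rw [dist_comm (γ 1) y] at h
          linarith
        have htri : dist y (γ 1) ≤ dist x y + dist x (γ 1) := by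
          have h := dist_triangle y x (γ 1)
          rw [dist_comm y x] at h
          exact h
        have he2 : dist y (γ 1) ^ 2 ≤ (dist x y + dist x (γ 1)) ^ 2 := by
          nlinarith [dist_nonneg (x := y) (y := γ 1), dist_nonneg (x := x) (y := y),
            dist_nonneg (x := x) (y := γ 1)]
        have main : (dist x y + dist x (γ 1)) ^ 2 / 2 ≤
            dist x y ^ 2 / (2 * s) + dist x (γ 1) ^ 2 / (2 * (1 - s)) := by
          rw [div_add_div _ _ (by positivity) (by positivity),
            div_le_div_iff₀ (by norm_num) (by positivity)]
          nlinarith [sq_nonneg (dist x y * (1 - s) - dist x (γ 1) * s)]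
        linarith
      linarith
  -- value of a = φ_s(γ s)
  have ha : interpPotential φ s (γ s) = φ (γ 0) - s * ℓ ^ 2 / 2 := by
    rcases eq_or_lt_of_le hs1 with h1 | hs1'
    · subst h1
      rw [interpPotential, if_neg one_ne_zero]
      simp only [mul_one]
      rw [(hpair.1 (γ 1)).csInf_eq ⟨_, γ 1, rfl⟩]
      linarith
    · rcases eq_or_lt_of_le hs0 with h0 | hs0'
      · rw [← h0] at *
        rw [interpPotential, if_pos rfl]
        ring
      · have hτ : (0:ℝ) < 1 - s := by linarith
        apply le_antisymm
        · have h := hUB hs1' (γ s)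
          have hdist : dist (γ s) (γ 1) = (1 - s) * ℓ := by
            rw [hd s hs0 hs1 1 zero_le_one le_rfl, abs_of_nonpos (by linarith)]
            ring
          rw [hdist] at h
          have h2 : ((1 - s) * ℓ) ^ 2 / (2 * (1 - s)) = (1 - s) * ℓ ^ 2 / 2 := by
            rw [div_eq_div_iff (by positivity) (by norm_num)]
            ring
          rw [h2] at h
          nlinarith [heq]
        · have h := hLB hs0' (γ s)
          have hdist : dist (γ s) (γ 0) = s * ℓ := by
            rw [hd s hs0 hs1 0 le_rfl zero_le_one, sub_zero, abs_of_nonneg hs0]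
          rw [hdist] at h
          have h2 : (s * ℓ) ^ 2 / (2 * s) = s * ℓ ^ 2 / 2 := by
            rw [div_eq_div_iff (by positivity) (by norm_num)]
            ring
          rw [h2] at h
          linarith
  -- distance lower bounds for points on the level set
  have hz0 : ∀ z : X, interpPotential φ s z = φ (γ 0) - s * ℓ ^ 2 / 2 →
      s * ℓ ≤ dist z (γ 0) := by
    intro z hz
    rcases eq_or_lt_of_le hs0 with h0 | hs0'
    · rw [← h0, zero_mul]
      exact dist_nonneg
    · have h := hLB hs0' z
      rw [hz] at h
      have h3 : s * ℓ ^ 2 / 2 ≤ dist z (γ 0) ^ 2 / (2 * s) := by linarith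
      rw [div_le_div_iff₀ (by norm_num) (by positivity)] at h3
      have h2 : (s * ℓ) ^ 2 ≤ dist z (γ 0) ^ 2 := by nlinarith
      have h4 := Real.sqrt_le_sqrt h2
      rwa [Real.sqrt_sq (by positivity), Real.sqrt_sq dist_nonneg] at h4
  have hz1 : ∀ z : X, interpPotential φ s z = φ (γ 0) - s * ℓ ^ 2 / 2 →
      (1 - s) * ℓ ≤ dist z (γ 1) := by
    intro z hz
    rcases eq_or_lt_of_le hs1 with h1 | hs1'
    · rw [h1]
      simpa using dist_nonneg
    · have hτ : (0:ℝ) < 1 - s := by linarith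
      have h := hUB hs1' z
      rw [hz] at h
      have h3 : (1 - s) * ℓ ^ 2 / 2 ≤ dist z (γ 1) ^ 2 / (2 * (1 - s)) := by
        nlinarith [heq]
      rw [div_le_div_iff₀ (by norm_num) (by positivity)] at h3
      have h2 : ((1 - s) * ℓ) ^ 2 ≤ dist z (γ 1) ^ 2 := by nlinarith
      have h4 := Real.sqrt_le_sqrt h2
      rwa [Real.sqrt_sq (by positivity), Real.sqrt_sq dist_nonneg] at h4
  -- main case split on ℓ
  rcases eq_or_lt_of_le hℓ0 with hℓ | hℓpos
  · -- degenerate geodesic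
    have hconst : ∀ u, 0 ≤ u → u ≤ 1 → γ u = γ s := by
      intro u hu hu'
      apply eq_of_dist_eq_zero
      rw [hd u hu hu' s hs0 hs1, ← hℓ, mul_zero]
    have h1 : ∀ u, 0 ≤ u → u ≤ 1 →
        signedDistFn (fun x => interpPotential φ s x - interpPotential φ s (γ s)) (γ u) = 0 := by
      intro u hu hu'
      simp only [signedDistFn]
      rw [hconst u hu hu', sub_self, Real.sign_zero, zero_mul]
    rw [h1 r hr hrt1, h1 t ht0 ht, hd r hr hrt1 t ht0 ht, ← hℓ, mul_zero, sub_zero]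
  · -- strict signs of f along the geodesic
    have hsign_pos : ∀ u, 0 ≤ u → u < s →
        φ (γ 0) - s * ℓ ^ 2 / 2 < interpPotential φ s (γ u) := by
      intro u hu hus
      have hs0' : 0 < s := lt_of_le_of_lt hu hus
      have h := hLB hs0' (γ u)
      have hdist : dist (γ u) (γ 0) = u * ℓ := by
        rw [hd u hu (by linarith) 0 le_rfl zero_le_one, sub_zero, abs_of_nonneg hu]
      rw [hdist] at h
      have h2 : (u * ℓ) ^ 2 / (2 * s) < s * ℓ ^ 2 / 2 := by
        rw [div_lt_div_iff₀ (by positivity) (by norm_num)]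
        nlinarith [mul_pos hℓpos hℓpos,
          mul_pos (sub_pos.2 hus) (show (0:ℝ) < s + u by linarith)]
      linarith
    have hsign_neg : ∀ u, s < u → u ≤ 1 →
        interpPotential φ s (γ u) < φ (γ 0) - s * ℓ ^ 2 / 2 := by
      intro u hsu hu'
      have hs1' : s < 1 := lt_of_lt_of_le hsu hu'
      have hτ : (0:ℝ) < 1 - s := by linarith
      have h := hUB hs1' (γ u)
      have hdist : dist (γ u) (γ 1) = (1 - u) * ℓ := by
        rw [hd u (by linarith) hu' 1 zero_le_one le_rfl, abs_of_nonpos (by linarith)]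
        ring
      rw [hdist] at h
      have h2 : ((1 - u) * ℓ) ^ 2 / (2 * (1 - s)) < (1 - s) * ℓ ^ 2 / 2 := by
        rw [div_lt_div_iff₀ (by positivity) (by norm_num)]
        nlinarith [mul_pos hℓpos hℓpos,
          mul_pos (show (0:ℝ) < (1 - s) - (1 - u) by linarith)
            (show (0:ℝ) < (1 - s) + (1 - u) by linarith)]
      nlinarith [heq]
    -- value of the signed distance along the geodesic
    have hmain : ∀ u, 0 ≤ u → u ≤ 1 →
        signedDistFn (fun x => interpPotential φ s x - interpPotential φ s (γ s)) (γ u)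
          = (s - u) * ℓ := by
      intro u hu hu'
      have hγsZ : γ s ∈ {y : X | interpPotential φ s y - interpPotential φ s (γ s) = 0} :=
        sub_self _
      have hZne : Set.Nonempty {y : X | interpPotential φ s y - interpPotential φ s (γ s) = 0} :=
        ⟨γ s, hγsZ⟩
      have hzdist : ∀ z ∈ {y : X | interpPotential φ s y - interpPotential φ s (γ s) = 0},
          |s - u| * ℓ ≤ dist (γ u) z := by
        intro z hz
        have hz' : interpPotential φ s z = φ (γ 0) - s * ℓ ^ 2 / 2 := by
          have hz2 : interpPotential φ s z - interpPotential φ s (γ s) = 0 := hz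
          rw [ha] at hz2
          linarith
        rcases le_total u s with hus | hsu
        · rw [abs_of_nonneg (by linarith : (0:ℝ) ≤ s - u)]
          have h1 := hz0 z hz'
          have h2 := dist_triangle z (γ u) (γ 0)
          have h3 : dist (γ u) (γ 0) = u * ℓ := by
            rw [hd u hu hu' 0 le_rfl zero_le_one, sub_zero, abs_of_nonneg hu]
          rw [dist_comm z (γ u)] at h2
          nlinarith
        · rw [abs_of_nonpos (by linarith : s - u ≤ 0)]
          have h1 := hz1 z hz'
          have h2 := dist_triangle z (γ u) (γ 1)
          have h3 : dist (γ u) (γ 1) = (1 - u) * ℓ := by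
            rw [hd u hu hu' 1 zero_le_one le_rfl, abs_of_nonpos (by linarith)]
            ring
          rw [dist_comm z (γ u)] at h2
          nlinarith
      have hinf : Metric.infDist (γ u)
          {y : X | interpPotential φ s y - interpPotential φ s (γ s) = 0} = |s - u| * ℓ := by
        apply le_antisymm
        · have h := Metric.infDist_le_dist_of_mem (x := γ u) hγsZ
          rwa [hd u hu hu' s hs0 hs1, abs_sub_comm u s] at h
        · rw [Metric.infDist_eq_iInf]
          haveI := hZne.to_subtype
          exact le_ciInf fun z => hzdist z z.2
      rcases lt_trichotomy u s with h | h | h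
      · have hp : 0 < interpPotential φ s (γ u) - interpPotential φ s (γ s) := by
          rw [ha]
          linarith [hsign_pos u hu h]
        simp only [signedDistFn]
        rw [Real.sign_of_pos hp, hinf, one_mul,
          abs_of_nonneg (by linarith : (0:ℝ) ≤ s - u)]
      · subst h
        simp [signedDistFn]
      · have hp : interpPotential φ s (γ u) - interpPotential φ s (γ s) < 0 := by
          rw [ha]
          linarith [hsign_neg u h hu']
        simp only [signedDistFn]
        rw [Real.sign_of_neg hp, hinf, abs_of_nonpos (by linarith : s - u ≤ 0)]
        ring
    rw [hmain r hr hrt1, hmain t ht0 ht, hd r hr hrt1 t ht0 ht,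
      abs_of_nonpos (by linarith : r - t ≤ 0)]
    ring
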